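/- Suppose P̃_t* ∈ T maximizes ∑_{i=1}^{K+1} φ(P̃_t^i)·l^i over T for every nondecreasing concave function φ : [0,∞) → ℝ (as the shortest-path allocation does). Set P_1*^i := P̃_t*^i/A and P_2*^i := (A−1)·P̃_t*^i/(A·b²). Then there exist δ_1*^i, δ_2*^i ≥ 0 with δ_1*^i·δ_2*^i = 0 for all i = 0,…,K such that the modified energy patterns 𝔈_1^i := E_1^i − δ_1*^i + δ_2*^i and 𝔈_2^i := E_2^i + (δ_1*^i − δ_2*^i)/b² satisfy 𝔈_1^i = Ẽ_t^i/A and 𝔈_2^i = (A−1)·Ẽ_t^i/(A·b²) for all i; moreover P_1* maximizes ∑_{i=1}^{K+1} C(A·P_1^i/N_0)·l^i over { P_1 : P_1^i ≥ 0, ∑_{i=1}^k P_1^i l^i ≤ ∑_{i=0}^{k-1} 𝔈_1^i for all k }, and P_2* maximizes ∑_{i=1}^{K+1} C(P_2^i/N_0)·l^i over { P_2 : P_2^i ≥ 0, ∑_{i=1}^k P_2^i l^i ≤ ∑_{i=0}^{k-1} 𝔈_2^i for all k }. Hence the optimal two-way ET solution is equivalent to disjoint single-user optimization for S and R with the modified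 EH patterns 𝔈_1 and 𝔈_2. -/

import Mathlib

/-- `C(x) = log₂(1+x)`. -/
noncomputable def Cfun (x : ℝ) : ℝ := Real.logb 2 (1 + x)

/-- `A = max(1, a²)`. -/
noncomputable def Aval (a : ℝ) : ℝ := max 1 (a ^ 2)

/-- The full-duplex noncoherent DF throughput
`F(P₁,P₂) = ∑_{i=1}^{K+1} min{ C((P₁ⁱ+b²P₂ⁱ)/N₀), C(A·P₁ⁱ/N₀) }·lⁱ`
(epochs indexed `0,…,K`). -/
noncomputable def Fthr (K : ℕ) (l : ℕ → ℝ) (N0 a b : ℝ) (P1 P2 : ℕ → ℝ) : ℝ :=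
  ∑ i ∈ Finset.range (K + 1),
    min (Cfun ((P1 i + b ^ 2 * P2 i) / N0)) (Cfun (Aval a * P1 i / N0)) * l i

/-- The no-ET feasible set `D`: nonnegative powers and energy causality at S and R. -/
def InD (K : ℕ) (l E1 E2 : ℕ → ℝ) (P1 P2 : ℕ → ℝ) : Prop :=
  (∀ i ∈ Finset.range (K + 1), 0 ≤ P1 i ∧ 0 ≤ P2 i) ∧
  (∀ k, 1 ≤ k → k ≤ K + 1 →
    ∑ i ∈ Finset.range k, P1 i * l i ≤ ∑ i ∈ Finset.range k, E1 i) ∧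
  (∀ k, 1 ≤ k → k ≤ K + 1 →
    ∑ i ∈ Finset.range k, P2 i * l i ≤ ∑ i ∈ Finset.range k, E2 i)

/-- The total-power feasible set `T` for total energies `Et`. -/
def InT (K : ℕ) (l Et : ℕ → ℝ) (Pt : ℕ → ℝ) : Prop :=
  (∀ i ∈ Finset.range (K + 1), 0 ≤ Pt i) ∧
  (∀ k, 1 ≤ k → k ≤ K + 1 →
    ∑ i ∈ Finset.range k, Pt i * l i ≤ ∑ i ∈ Finset.range k, Et i)

lemma cfun_zero : Cfun 0 = 0 := by simp [Cfun]

lemma cfun_monotoneOn (κ : ℝ) (hκ : 0 ≤ κ) :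
    MonotoneOn (fun x => Cfun (κ * x)) (Set.Ici 0) := by
  intro x hx y hy hxy
  have hx' : (0:ℝ) ≤ x := hx
  have h1 : (0:ℝ) < 1 + κ * x := by nlinarith [mul_nonneg hκ hx']
  simp only [Cfun]
  exact Real.logb_le_logb_of_le one_lt_two h1 (by nlinarith)

lemma cfun_concaveOn (κ : ℝ) (hκ : 0 ≤ κ) :
    ConcaveOn ℝ (Set.Ici 0) (fun x => Cfun (κ * x)) := by
  constructor
  · exact convex_Ici 0
  · intro x hx y hy p q hp hq hpq
    have hx' : (0:ℝ) ≤ x := hx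
    have hy' : (0:ℝ) ≤ y := hy
    have h1 : (0:ℝ) < 1 + κ * x := by nlinarith [mul_nonneg hκ hx']
    have h2 : (0:ℝ) < 1 + κ * y := by nlinarith [mul_nonneg hκ hy']
    have hlog := (strictConcaveOn_log_Ioi.concaveOn).2 (Set.mem_Ioi.mpr h1)
      (Set.mem_Ioi.mpr h2) hp hq hpq
    have harg : p • (1 + κ * x) + q • (1 + κ * y) = 1 + κ * (p • x + q • y) := by
      simp only [smul_eq_mul]; linear_combination hpq
    rw [harg] at hlog
    have hlog2 : (0:ℝ) < Real.log 2 := Real.log_pos one_lt_two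
    simp only [smul_eq_mul, Cfun, Real.logb] at hlog ⊢
    rw [← mul_div_assoc, ← mul_div_assoc, ← add_div]
    exact div_le_div_of_nonneg_right hlog hlog2.le

theorem stmt_12 (K : ℕ) (l E1 E2 : ℕ → ℝ) (N0 a b : ℝ)
    (hl : ∀ i ∈ Finset.range (K + 1), 0 < l i)
    (hE1 : ∀ i ∈ Finset.range (K + 1), 0 ≤ E1 i)
    (hE2 : ∀ i ∈ Finset.range (K + 1), 0 ≤ E2 i)
    (hN0 : 0 < N0) (hb : b ≠ 0)
    (Pts : ℕ → ℝ)
    (hPtfeas : InT K l (fun i => E1 i + b ^ 2 * E2 i) Pts)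
    (hPtopt : ∀ φ : ℝ → ℝ, MonotoneOn φ (Set.Ici 0) → ConcaveOn ℝ (Set.Ici 0) φ →
      ∀ Qt : ℕ → ℝ, InT K l (fun i => E1 i + b ^ 2 * E2 i) Qt →
        ∑ i ∈ Finset.range (K + 1), φ (Qt i) * l i ≤
          ∑ i ∈ Finset.range (K + 1), φ (Pts i) * l i) :
    ∃ δ1 δ2 : ℕ → ℝ,
      (∀ i ∈ Finset.range (K + 1), 0 ≤ δ1 i ∧ 0 ≤ δ2 i ∧ δ1 i * δ2 i = 0) ∧
      (∀ i ∈ Finset.range (K + 1),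
        E1 i - δ1 i + δ2 i = (E1 i + b ^ 2 * E2 i) / Aval a ∧
        E2 i + (δ1 i - δ2 i) / b ^ 2 =
          (Aval a - 1) * (E1 i + b ^ 2 * E2 i) / (Aval a * b ^ 2)) ∧
      ((∀ i ∈ Finset.range (K + 1), 0 ≤ Pts i / Aval a) ∧
        (∀ k, 1 ≤ k → k ≤ K + 1 →
          ∑ i ∈ Finset.range k, Pts i / Aval a * l i ≤
            ∑ i ∈ Finset.range k, (E1 i - δ1 i + δ2 i)) ∧
        (∀ Q1 : ℕ → ℝ, (∀ i ∈ Finset.range (K + 1), 0 ≤ Q1 i) →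
          (∀ k, 1 ≤ k → k ≤ K + 1 →
            ∑ i ∈ Finset.range k, Q1 i * l i ≤
              ∑ i ∈ Finset.range k, (E1 i - δ1 i + δ2 i)) →
          ∑ i ∈ Finset.range (K + 1), Cfun (Aval a * Q1 i / N0) * l i ≤
            ∑ i ∈ Finset.range (K + 1),
              Cfun (Aval a * (Pts i / Aval a) / N0) * l i)) ∧
      ((∀ i ∈ Finset.range (K + 1),
          0 ≤ (Aval a - 1) * Pts i / (Aval a * b ^ 2)) ∧
        (∀ k, 1 ≤ k → k ≤ K + 1 →
          ∑ i ∈ Finset.range k, (Aval a - 1) * Pts i / (Aval a * b ^ 2) * l i ≤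
            ∑ i ∈ Finset.range k, (E2 i + (δ1 i - δ2 i) / b ^ 2)) ∧
        (∀ Q2 : ℕ → ℝ, (∀ i ∈ Finset.range (K + 1), 0 ≤ Q2 i) →
          (∀ k, 1 ≤ k → k ≤ K + 1 →
            ∑ i ∈ Finset.range k, Q2 i * l i ≤
              ∑ i ∈ Finset.range k, (E2 i + (δ1 i - δ2 i) / b ^ 2)) →
          ∑ i ∈ Finset.range (K + 1), Cfun (Q2 i / N0) * l i ≤
            ∑ i ∈ Finset.range (K + 1),
              Cfun ((Aval a - 1) * Pts i / (Aval a * b ^ 2) / N0) * l i)) := by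
  have hA1 : (1:ℝ) ≤ Aval a := le_max_left _ _
  have hA0 : (0:ℝ) < Aval a := lt_of_lt_of_le one_pos hA1
  have hAne : Aval a ≠ 0 := hA0.ne'
  have hb2 : (0:ℝ) < b ^ 2 := by positivity
  set A : ℝ := Aval a with hAdef
  set Et : ℕ → ℝ := fun i => E1 i + b ^ 2 * E2 i with hEtdef
  set δ1 : ℕ → ℝ := fun i => max 0 (E1 i - Et i / A) with hδ1def
  set δ2 : ℕ → ℝ := fun i => max 0 (Et i / A - E1 i) with hδ2def
  have hδsub : ∀ i, δ1 i - δ2 i = E1 i - Et i / A := by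
    intro i
    rcases le_total (Et i / A) (E1 i) with h | h
    · rw [hδ1def, hδ2def]
      simp only
      rw [max_eq_right (by linarith), max_eq_left (by linarith)]
      ring
    · rw [hδ1def, hδ2def]
      simp only
      rw [max_eq_left (by linarith), max_eq_right (by linarith)]
      ring
  have hpat1 : ∀ i, E1 i - δ1 i + δ2 i = Et i / A := by
    intro i; have := hδsub i; linarith
  have hpat2 : ∀ i, E2 i + (δ1 i - δ2 i) / b ^ 2 = (A - 1) * Et i / (A * b ^ 2) := by
    intro i
    rw [hδsub i, hEtdef]
    field_simp
    ring
  -- partial sums of the modified patterns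
  have hsum1 : ∀ k, ∑ i ∈ Finset.range k, (E1 i - δ1 i + δ2 i)
      = (∑ i ∈ Finset.range k, Et i) / A := by
    intro k
    rw [Finset.sum_div]
    exact Finset.sum_congr rfl fun i _ => hpat1 i
  have hsum2 : ∀ k, ∑ i ∈ Finset.range k, (E2 i + (δ1 i - δ2 i) / b ^ 2)
      = ((A - 1) / (A * b ^ 2)) * ∑ i ∈ Finset.range k, Et i := by
    intro k
    rw [Finset.mul_sum]
    refine Finset.sum_congr rfl fun i _ => ?_
    rw [hpat2 i]; ring
  refine ⟨δ1, δ2, ?_, ?_, ⟨?_, ?_, ?_⟩, ⟨?_, ?_, ?_⟩⟩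
  · intro i _
    refine ⟨le_max_left _ _, le_max_left _ _, ?_⟩
    rcases le_total (Et i / A) (E1 i) with h | h
    · rw [hδ2def]; simp only
      rw [max_eq_left (by linarith)]; ring
    · rw [hδ1def]; simp only
      rw [max_eq_left (by linarith)]; ring
  · intro i _
    exact ⟨hpat1 i, hpat2 i⟩
  · intro i hi
    exact div_nonneg (hPtfeas.1 i hi) hA0.le
  · -- feasibility at S
    intro k hk1 hk2
    rw [hsum1 k]
    have h1 : ∑ i ∈ Finset.range k, Pts i / A * l i
        = (∑ i ∈ Finset.range k, Pts i * l i) / A := by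
      rw [Finset.sum_div]
      exact Finset.sum_congr rfl fun i _ => by ring
    rw [h1]
    exact div_le_div_of_nonneg_right (hPtfeas.2 k hk1 hk2) hA0.le
  · -- optimality at S
    intro Q1 hQ1 hQ1f
    have hκ : (0:ℝ) ≤ N0⁻¹ := by positivity
    have hQt : InT K l Et (fun i => A * Q1 i) := by
      constructor
      · intro i hi; exact mul_nonneg hA0.le (hQ1 i hi)
      · intro k hk1 hk2
        have h := hQ1f k hk1 hk2
        rw [hsum1 k] at h
        have h2 : ∑ i ∈ Finset.range k, A * Q1 i * l i
            = A * ∑ i ∈ Finset.range k, Q1 i * l i := by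
          rw [Finset.mul_sum]
          exact Finset.sum_congr rfl fun i _ => by ring
        rw [h2]
        calc A * ∑ i ∈ Finset.range k, Q1 i * l i
            ≤ A * ((∑ i ∈ Finset.range k, Et i) / A) :=
              mul_le_mul_of_nonneg_left h hA0.le
          _ = ∑ i ∈ Finset.range k, Et i := by field_simp
    have hkey := hPtopt (fun x => Cfun (N0⁻¹ * x)) (cfun_monotoneOn _ hκ)
      (cfun_concaveOn _ hκ) (fun i => A * Q1 i) hQt
    calc ∑ i ∈ Finset.range (K + 1), Cfun (A * Q1 i / N0) * l i
        = ∑ i ∈ Finset.range (K + 1), Cfun (N0⁻¹ * (A * Q1 i)) * l i := by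
          refine Finset.sum_congr rfl fun i _ => ?_
          rw [inv_mul_eq_div]
      _ ≤ ∑ i ∈ Finset.range (K + 1), Cfun (N0⁻¹ * Pts i) * l i := hkey
      _ = ∑ i ∈ Finset.range (K + 1), Cfun (A * (Pts i / A) / N0) * l i := by
          refine Finset.sum_congr rfl fun i _ => ?_
          have : A * (Pts i / A) = Pts i := by field_simp
          rw [this, inv_mul_eq_div]
  · intro i hi
    have := hPtfeas.1 i hi
    have h1 : (0:ℝ) ≤ A - 1 := by linarith
    positivity
  · -- feasibility at R
    intro k hk1 hk2
    rw [hsum2 k]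
    have h1 : ∑ i ∈ Finset.range k, (A - 1) * Pts i / (A * b ^ 2) * l i
        = ((A - 1) / (A * b ^ 2)) * ∑ i ∈ Finset.range k, Pts i * l i := by
      rw [Finset.mul_sum]
      exact Finset.sum_congr rfl fun i _ => by ring
    rw [h1]
    have hc : (0:ℝ) ≤ (A - 1) / (A * b ^ 2) := by
      have h1 : (0:ℝ) ≤ A - 1 := by linarith
      positivity
    exact mul_le_mul_of_nonneg_left (hPtfeas.2 k hk1 hk2) hc
  · -- optimality at R
    intro Q2 hQ2 hQ2f
    rcases eq_or_lt_of_le hA1 with hAeq | hAgt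
    · -- A = 1 : both sides are zero
      have hzero : ∀ i ∈ Finset.range (K + 1), Q2 i = 0 := by
        have h := hQ2f (K + 1) (by omega) le_rfl
        rw [hsum2 (K + 1), ← hAeq] at h
        simp only [sub_self, zero_div, zero_mul] at h
        intro i hi
        have hall := (Finset.sum_eq_zero_iff_of_nonneg (fun j hj =>
          mul_nonneg (hQ2 j hj) (hl j hj).le)).mp
          (le_antisymm h (Finset.sum_nonneg fun j hj =>
            mul_nonneg (hQ2 j hj) (hl j hj).le)) i hi
        have := (hl i hi).ne'
        rcases mul_eq_zero.mp hall with h' | h'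
        · exact h'
        · exact absurd h' this
      have hL : ∑ i ∈ Finset.range (K + 1), Cfun (Q2 i / N0) * l i = 0 := by
        refine Finset.sum_eq_zero fun i hi => ?_
        rw [hzero i hi, zero_div, cfun_zero, zero_mul]
      have hR : ∑ i ∈ Finset.range (K + 1),
          Cfun ((A - 1) * Pts i / (A * b ^ 2) / N0) * l i = 0 := by
        refine Finset.sum_eq_zero fun i hi => ?_
        rw [← hAeq]
        simp [cfun_zero]
      rw [hL, hR]
    · -- A > 1
      set c : ℝ := (A - 1) / (A * b ^ 2) with hcdef
      have hc : (0:ℝ) < c := by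
        have h1 : (0:ℝ) < A - 1 := by linarith
        positivity
      have hκ : (0:ℝ) ≤ c / N0 := by positivity
      have hQt : InT K l Et (fun i => Q2 i / c) := by
        constructor
        · intro i hi; exact div_nonneg (hQ2 i hi) hc.le
        · intro k hk1 hk2
          have h := hQ2f k hk1 hk2
          rw [hsum2 k] at h
          have h2 : ∑ i ∈ Finset.range k, Q2 i / c * l i
              = (∑ i ∈ Finset.range k, Q2 i * l i) / c := by
            rw [Finset.sum_div]
            exact Finset.sum_congr rfl fun i _ => by ring
          rw [h2]
          rw [div_le_iff₀ hc]
          calc ∑ i ∈ Finset.range k, Q2 i * l i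
              ≤ c * ∑ i ∈ Finset.range k, Et i := h
            _ = (∑ i ∈ Finset.range k, Et i) * c := by ring
      have hkey := hPtopt (fun x => Cfun (c / N0 * x)) (cfun_monotoneOn _ hκ)
        (cfun_concaveOn _ hκ) (fun i => Q2 i / c) hQt
      calc ∑ i ∈ Finset.range (K + 1), Cfun (Q2 i / N0) * l i
          = ∑ i ∈ Finset.range (K + 1), Cfun (c / N0 * (Q2 i / c)) * l i := by
            refine Finset.sum_congr rfl fun i _ => ?_
            have : c / N0 * (Q2 i / c) = Q2 i / N0 := by
              field_simp
            rw [this]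
        _ ≤ ∑ i ∈ Finset.range (K + 1), Cfun (c / N0 * Pts i) * l i := hkey
        _ = ∑ i ∈ Finset.range (K + 1),
              Cfun ((A - 1) * Pts i / (A * b ^ 2) / N0) * l i := by
            refine Finset.sum_congr rfl fun i _ => ?_
            have : c / N0 * Pts i = (A - 1) * Pts i / (A * b ^ 2) / N0 := by
              rw [hcdef]; ring
            rw [this]
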